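/- Let V be a finite-dimensional real inner product space, S ⊆ V a set of states, and E₊ ⊆ V a pointed convex cone of effects with ⟨e,s⟩ ≥ 0 for all e ∈ E₊, s ∈ S. Call a nonzero effect e ∈ E₊ ray-extreme if it generates an extreme ray of E₊ (i.e., whenever e = a + b with a, b ∈ E₊, both a and b are nonnegative multiples of e). Suppose e, f, g are ray-extreme effects with f ≠ g, f and g not positive multiples of each other, and suppose for every ray-extreme effect h there exists s ∈ S with ⟨h,s⟩ > 0. If e ∈ span{f, g}, then e is a nonnegative multiple of f or a nonnegative multiple of g. -/
import Mathlib


open scoped RealInnerProductSpace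

/-- `e` generates an extreme ray of the pointed convex cone `E`. -/
def IsRayExtreme {V : Type*} [AddCommGroup V] [Module ℝ V] (E : Set V) (e : V) : Prop :=
  e ∈ E ∧ e ≠ 0 ∧
    ∀ a ∈ E, ∀ b ∈ E, e = a + b →
      (∃ c : ℝ, 0 ≤ c ∧ a = c • e) ∧ (∃ c : ℝ, 0 ≤ c ∧ b = c • e)

theorem stmt_1 {V : Type*} [NormedAddCommGroup V] [InnerProductSpace ℝ V]
    [FiniteDimensional ℝ V]
    (S : Set V) (E : Set V)
    (hsmul : ∀ e ∈ E, ∀ c : ℝ, 0 ≤ c → c • e ∈ E)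
    (hadd : ∀ a ∈ E, ∀ b ∈ E, a + b ∈ E)
    (hconvex : Convex ℝ E)
    (hpointed : ∀ e ∈ E, -e ∈ E → e = 0)
    (hpos : ∀ e ∈ E, ∀ s ∈ S, 0 ≤ ⟪e, s⟫)
    (e f g : V)
    (he : IsRayExtreme E e) (hf : IsRayExtreme E f) (hg : IsRayExtreme E g)
    (hfg : f ≠ g)
    (hnotmul : ¬ ∃ c : ℝ, 0 < c ∧ f = c • g)
    (hsep : ∀ h : V, IsRayExtreme E h → ∃ s ∈ S, 0 < ⟪h, s⟫)
    (hspan : e ∈ Submodule.span ℝ ({f, g} : Set V)) :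
    (∃ c : ℝ, 0 ≤ c ∧ e = c • f) ∨ (∃ c : ℝ, 0 ≤ c ∧ e = c • g) := by
  obtain ⟨α, β, hab⟩ := Submodule.mem_span_pair.mp hspan
  obtain ⟨heE, hene, hext⟩ := he
  obtain ⟨hfE, hfne, hfext⟩ := hf
  obtain ⟨hgE, hgne, hgext⟩ := hg
  have habs : e = α • f + β • g := hab.symm
  rcases lt_trichotomy α 0 with hα | hα | hα
  · rcases le_or_gt β 0 with hβ | hβ
    · exfalso
      have hneg : -e = (-α) • f + (-β) • g := by rw [habs]; module
      have hmem : -e ∈ E := by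
        rw [hneg]
        exact hadd _ (hsmul f hfE _ (by linarith)) _ (hsmul g hgE _ (by linarith))
      exact hene (hpointed e heE hmem)
    · have hβ' : β ≠ 0 := ne_of_gt hβ
      have h1 : β⁻¹ • e ∈ E := hsmul e heE _ (by positivity)
      have h2 : (β⁻¹ * (-α)) • f ∈ E := hsmul f hfE _ (mul_nonneg (inv_nonneg.2 hβ.le) (by linarith))
      have hdecomp : g = β⁻¹ • e + (β⁻¹ * (-α)) • f := by
        rw [habs, smul_add, smul_smul, smul_smul, inv_mul_cancel₀ hβ', one_smul]
        module
      obtain ⟨⟨c, hc, hce⟩, -⟩ := hgext _ h1 _ h2 hdecomp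
      right
      refine ⟨β * c, by positivity, ?_⟩
      have : β • (β⁻¹ • e) = β • (c • g) := by rw [hce]
      rwa [smul_smul, mul_inv_cancel₀ hβ', one_smul, smul_smul] at this
  · rcases le_or_gt β 0 with hβ | hβ
    · rcases eq_or_lt_of_le hβ with hβ0 | hβneg
      · right
        exact ⟨0, le_refl _, by rw [habs, hα, hβ0]; simp⟩
      · exfalso
        have hneg : -e = (-β) • g := by rw [habs, hα]; module
        have hmem : -e ∈ E := by rw [hneg]; exact hsmul g hgE _ (by linarith)
        exact hene (hpointed e heE hmem)
    · right
      exact ⟨β, le_of_lt hβ, by rw [habs, hα]; simp⟩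
  · rcases lt_trichotomy β 0 with hβ | hβ | hβ
    · have hα' : α ≠ 0 := ne_of_gt hα
      have h1 : α⁻¹ • e ∈ E := hsmul e heE _ (by positivity)
      have h2 : (α⁻¹ * (-β)) • g ∈ E := hsmul g hgE _ (mul_nonneg (inv_nonneg.2 hα.le) (by linarith))
      have hdecomp : f = α⁻¹ • e + (α⁻¹ * (-β)) • g := by
        rw [habs, smul_add, smul_smul, smul_smul, inv_mul_cancel₀ hα', one_smul]
        module
      obtain ⟨⟨c, hc, hce⟩, -⟩ := hfext _ h1 _ h2 hdecomp
      left
      refine ⟨α * c, by positivity, ?_⟩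
      have : α • (α⁻¹ • e) = α • (c • f) := by rw [hce]
      rwa [smul_smul, mul_inv_cancel₀ hα', one_smul, smul_smul] at this
    · left
      exact ⟨α, le_of_lt hα, by rw [habs, hβ]; simp⟩
    · exfalso
      obtain ⟨⟨c, hc, hcf⟩, ⟨d, hd, hdg⟩⟩ :=
        hext _ (hsmul f hfE α (le_of_lt hα)) _ (hsmul g hgE β (le_of_lt hβ)) habs
      have hcpos : 0 < c := by
        rcases lt_or_eq_of_le hc with h | h
        · exact h
        · exfalso
          apply hfne
          have : α • f = (0:ℝ) • e := by rw [hcf, ← h]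
          rw [zero_smul] at this
          have := smul_eq_zero.mp this
          rcases this with h' | h'
          · exact absurd h' (ne_of_gt hα)
          · exact h'
      have hdpos : 0 < d := by
        rcases lt_or_eq_of_le hd with h | h
        · exact h
        · exfalso
          apply hgne
          have : β • g = (0:ℝ) • e := by rw [hdg, ← h]
          rw [zero_smul] at this
          have := smul_eq_zero.mp this
          rcases this with h' | h'
          · exact absurd h' (ne_of_gt hβ)
          · exact h'
      apply hnotmul
      refine ⟨(α⁻¹ * c) * (d⁻¹ * β), by positivity, ?_⟩
      have heg : e = (d⁻¹ * β) • g := by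
        have : d⁻¹ • (β • g) = d⁻¹ • (d • e) := by rw [hdg]
        rw [smul_smul, smul_smul, inv_mul_cancel₀ (ne_of_gt hdpos), one_smul] at this
        exact this.symm
      have : α⁻¹ • (α • f) = α⁻¹ • (c • e) := by rw [hcf]
      rw [smul_smul, smul_smul, inv_mul_cancel₀ (ne_of_gt hα), one_smul] at this
      rw [this, heg, smul_smul]
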